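/- Let p be an odd prime and n ≥ 1. If K is a closed subgroup of GL_n(ℤ_p) whose image under the reduction map GL_n(ℤ_p) → GL_n(ℤ/p²ℤ) is all of GL_n(ℤ/p²ℤ), then K = GL_n(ℤ_p). (Lemma 2.2.1(a) instantiated at the reductive group scheme G = GL_n over ℤ_p = W(𝔽_p).) -/

import Mathlib

open Finset in
private lemma coeff_dvd_aux {p : ℕ} (hp : p.Prime) (hodd : Odd p) {m k : ℕ}
    (hm : 1 ≤ m) (hk2 : 2 ≤ k) (hkp : k ≤ p) :
    p ^ (m + 2) ∣ p ^ (k * m) * p.choose k := by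
  have h3 : 3 ≤ p := by
    have h2 := hp.two_le
    rcases h2.lt_or_eq with h | h
    · omega
    · exfalso; rw [← h] at hodd; exact (Nat.not_odd_iff_even.mpr even_two) hodd
  rcases lt_or_eq_of_le hkp with h | h
  · have h1 : p ∣ p.choose k := hp.dvd_choose_self (by omega) h
    have : p ^ (m + 2) ∣ p ^ (k * m) * p := by
      rw [← pow_succ]; exact pow_dvd_pow _ (by nlinarith)
    exact this.trans (mul_dvd_mul_left _ h1)
  · subst h
    exact Dvd.dvd.mul_right (pow_dvd_pow _ (by nlinarith)) _

section matrices

variable {p n : ℕ} [Fact p.Prime]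

private lemma entry_dvd_exists {m : ℕ} {X : Matrix (Fin n) (Fin n) ℤ_[p]}
    (h : ∀ i j, (p : ℤ_[p]) ^ m ∣ X i j) :
    ∃ C : Matrix (Fin n) (Fin n) ℤ_[p], X = (p : ℤ_[p]) ^ m • C := by
  refine ⟨Matrix.of fun i j => (h i j).choose, ?_⟩
  ext i j
  simpa [Matrix.smul_apply] using (h i j).choose_spec

private lemma dvd_trip {d : ℤ_[p]} {D : Matrix (Fin n) (Fin n) ℤ_[p]}
    (h : ∀ i j, d ∣ D i j) (U V : Matrix (Fin n) (Fin n) ℤ_[p]) :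
    ∀ i j, d ∣ (U * D * V) i j := by
  intro i j
  rw [Matrix.mul_apply]
  refine Finset.dvd_sum fun b _ => ?_
  refine Dvd.dvd.mul_right ?_ _
  rw [Matrix.mul_apply]
  exact Finset.dvd_sum fun a _ => ((h a b).mul_left _)

open Finset in
private lemma pow_p_key (hodd : Odd p) {m : ℕ} (hm : 1 ≤ m)
    (B : Matrix (Fin n) (Fin n) ℤ_[p]) :
    ∃ C : Matrix (Fin n) (Fin n) ℤ_[p],
      (1 + (p : ℤ_[p]) ^ m • B) ^ p =
        1 + (p : ℤ_[p]) ^ (m + 1) • B + (p : ℤ_[p]) ^ (m + 2) • C := by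
  have hp : p.Prime := Fact.out
  have hb : ((p : ℤ_[p]) ^ m • B + 1) ^ p
      = ∑ k ∈ range (p + 1), ((p : ℤ_[p]) ^ m • B) ^ k * 1 ^ (p - k) * (p.choose k : Matrix (Fin n) (Fin n) ℤ_[p]) :=
    Commute.add_pow (Commute.one_right _) p
  -- each term
  have hterm : ∀ k, ((p : ℤ_[p]) ^ m • B) ^ k * 1 ^ (p - k) * (p.choose k : Matrix (Fin n) (Fin n) ℤ_[p])
      = ((p : ℤ_[p]) ^ (k * m) * (p.choose k : ℤ_[p])) • B ^ k := by
    intro k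
    rw [one_pow, mul_one, smul_pow, ← pow_mul]
    rw [show ((p.choose k : Matrix (Fin n) (Fin n) ℤ_[p])) = ((p.choose k : ℤ_[p]) • (1 : Matrix (Fin n) (Fin n) ℤ_[p])) by
      rw [← Algebra.algebraMap_eq_smul_one, map_natCast]]
    rw [mul_smul_comm, mul_one, smul_smul, mul_comm k m, mul_comm]
  -- split range
  have hp3 : 3 ≤ p := by
    rcases hp.two_le.lt_or_eq with h | h
    · omega
    · exfalso; rw [← h] at hodd; exact (Nat.not_odd_iff_even.mpr even_two) hodd
  have hsplit : range (p + 1) = insert 0 (insert 1 (Ico 2 (p + 1))) := by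
    ext x
    simp [Finset.mem_range, Finset.mem_Ico]
    omega
  -- divisibility of the tail coefficients
  have hc : ∀ k ∈ Ico 2 (p + 1), ∃ c : ℤ_[p],
      (p : ℤ_[p]) ^ (k * m) * (p.choose k : ℤ_[p]) = (p : ℤ_[p]) ^ (m + 2) * c := by
    intro k hk
    rw [mem_Ico] at hk
    have := coeff_dvd_aux hp hodd hm hk.1 (by omega)
    have : ((p : ℤ_[p]) ^ (m + 2)) ∣ (p : ℤ_[p]) ^ (k * m) * (p.choose k : ℤ_[p]) := by
      have h2 := Nat.cast_dvd_cast (α := ℤ_[p]) this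
      push_cast at h2
      exact h2
    exact this
  choose c hc using hc
  refine ⟨∑ k ∈ (Ico 2 (p + 1)).attach, c k.1 k.2 • B ^ (k.1 : ℕ), ?_⟩
  rw [add_comm (1 : Matrix (Fin n) (Fin n) ℤ_[p]), hb]
  rw [hsplit, Finset.sum_insert (by simp), Finset.sum_insert (by simp)]
  rw [hterm 0, hterm 1]
  rw [← Finset.sum_attach (Ico 2 (p+1))]
  have htail : ∀ k : {x // x ∈ Ico 2 (p+1)},
      ((p : ℤ_[p]) ^ m • B) ^ (k : ℕ) * 1 ^ (p - (k:ℕ)) * ((p.choose k : ℕ) : Matrix (Fin n) (Fin n) ℤ_[p])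
        = (p : ℤ_[p]) ^ (m + 2) • (c k.1 k.2 • B ^ (k.1 : ℕ)) := by
    intro k
    rw [hterm, hc k.1 k.2, mul_smul]
  rw [Finset.sum_congr rfl (fun k _ => htail k), ← Finset.smul_sum]
  simp only [pow_zero, one_mul, zero_mul, Nat.choose_zero_right, Nat.choose_one_right]
  rw [pow_one, Nat.cast_one, one_smul, ← pow_succ, add_assoc]

end matrices

private lemma red_eq_dvd {p n : ℕ} [Fact p.Prime] {m : ℕ} {k g : GL (Fin n) ℤ_[p]}
    (h : Matrix.GeneralLinearGroup.map (PadicInt.toZModPow m) k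
       = Matrix.GeneralLinearGroup.map (PadicInt.toZModPow m) g) :
    ∀ i j, (p : ℤ_[p]) ^ m ∣ ((k : Matrix (Fin n) (Fin n) ℤ_[p]) - g) i j := by
  intro i j
  have h1 : PadicInt.toZModPow m (k i j) = PadicInt.toZModPow m (g i j) := by
    rw [← Matrix.GeneralLinearGroup.map_apply, ← Matrix.GeneralLinearGroup.map_apply, h]
  have h2 : (k i j - g i j) ∈ RingHom.ker (PadicInt.toZModPow (p := p) m) := by
    simp [RingHom.mem_ker, map_sub, h1]
  rw [PadicInt.ker_toZModPow, Ideal.mem_span_singleton] at h2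
  simpa [Matrix.sub_apply] using h2

private lemma isUnit_one_add_p_smul {p n : ℕ} [Fact p.Prime]
    (A : Matrix (Fin n) (Fin n) ℤ_[p]) :
    IsUnit (1 + (p : ℤ_[p]) • A) := by
  have hp : p.Prime := Fact.out
  rw [Matrix.isUnit_iff_isUnit_det, PadicInt.isUnit_iff]
  set X := (1 : Matrix (Fin n) (Fin n) ℤ_[p]) + (p : ℤ_[p]) • A with hX
  have hle : ‖X.det‖ ≤ 1 := PadicInt.norm_le_one _
  by_contra hne
  have hlt : ‖X.det‖ < 1 := lt_of_le_of_ne hle hne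
  rw [PadicInt.norm_lt_one_iff_dvd] at hlt
  have hmap : X.map (PadicInt.toZMod (p := p)) = 1 := by
    ext i j
    simp only [Matrix.map_apply, hX, Matrix.add_apply, Matrix.smul_apply, map_add, map_mul,
      smul_eq_mul]
    have hp0 : PadicInt.toZMod ((p : ℤ_[p])) = 0 := by
      rw [map_natCast, ZMod.natCast_self]
    rw [hp0, zero_mul, add_zero]
    by_cases hij : i = j <;> simp [Matrix.one_apply, hij]
  have hdet1 : PadicInt.toZMod (X.det) = 1 := by
    rw [RingHom.map_det]
    rw [show (PadicInt.toZMod.mapMatrix X) = X.map (PadicInt.toZMod (p := p)) from rfl, hmap, Matrix.det_one]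
  obtain ⟨c, hc⟩ := hlt
  rw [hc, map_mul, map_natCast, ZMod.natCast_self, zero_mul] at hdet1
  exact one_ne_zero hdet1.symm

/-- Let `p` be an odd prime and `n ≥ 1`. If `K` is a closed subgroup of
`GL n ℤ_[p]` whose image under the reduction map `GL n ℤ_[p] → GL n (ℤ/p²ℤ)` is all of
`GL n (ℤ/p²ℤ)`, then `K = GL n ℤ_[p]`. -/
theorem stmt0 (p : ℕ) [Fact p.Prime] (hp : Odd p) (n : ℕ) (hn : 1 ≤ n)
    (K : Subgroup (GL (Fin n) ℤ_[p]))
    (hclosed : IsClosed (K : Set (GL (Fin n) ℤ_[p])))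
    (hsurj : ∀ g : GL (Fin n) (ZMod (p ^ 2)),
      ∃ k ∈ K, Matrix.GeneralLinearGroup.map (PadicInt.toZModPow 2) k = g) :
    K = ⊤ := by
  have hprime : p.Prime := Fact.out
  -- Step 1: the "T" family
  have T : ∀ m : ℕ, 1 ≤ m → ∀ A : Matrix (Fin n) (Fin n) ℤ_[p],
      ∃ k ∈ K, ∀ i j, (p : ℤ_[p]) ^ (m + 1) ∣
        ((k : Matrix (Fin n) (Fin n) ℤ_[p]) - (1 + (p : ℤ_[p]) ^ m • A)) i j := by
    intro m hm
    induction m, hm using Nat.le_induction with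
    | base =>
      intro A
      have hu : IsUnit ((1 : Matrix (Fin n) (Fin n) ℤ_[p]) + (p : ℤ_[p]) ^ 1 • A) := by
        rw [pow_one]; exact isUnit_one_add_p_smul A
      obtain ⟨k, hkK, hk⟩ := hsurj (Matrix.GeneralLinearGroup.map (PadicInt.toZModPow 2) hu.unit)
      refine ⟨k, hkK, fun i j => ?_⟩
      have := red_eq_dvd hk i j
      rwa [hu.unit_spec] at this
    | succ m hm ih =>
      intro A
      obtain ⟨k, hkK, hk⟩ := ih A
      obtain ⟨C, hC⟩ := entry_dvd_exists hk
      have hkval : (k : Matrix (Fin n) (Fin n) ℤ_[p])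
          = 1 + (p : ℤ_[p]) ^ m • (A + (p : ℤ_[p]) • C) := by
        have h1 : (k : Matrix (Fin n) (Fin n) ℤ_[p])
            = 1 + (p : ℤ_[p]) ^ m • A + (p : ℤ_[p]) ^ (m + 1) • C := by
          rw [← hC]; abel
        rw [h1, smul_add, smul_smul, ← pow_succ]; abel
      obtain ⟨D, hD⟩ := pow_p_key hp hm (A + (p : ℤ_[p]) • C)
      refine ⟨k ^ p, pow_mem hkK p, fun i j => ?_⟩
      have hval : ((k ^ p : GL (Fin n) ℤ_[p]) : Matrix (Fin n) (Fin n) ℤ_[p])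
          - (1 + (p : ℤ_[p]) ^ (m + 1) • A) = (p : ℤ_[p]) ^ (m + 2) • (C + D) := by
        rw [Units.val_pow_eq_pow_val, hkval, hD, smul_add (((p : ℤ_[p])) ^ (m+1)) A,
          smul_smul, ← pow_succ, smul_add]
        abel
      rw [hval]
      exact ⟨(C + D) i j, by simp [Matrix.smul_apply]⟩
  -- Step 2: the "S" family
  have S : ∀ m : ℕ, 2 ≤ m → ∀ g : GL (Fin n) ℤ_[p],
      ∃ k ∈ K, ∀ i j, (p : ℤ_[p]) ^ m ∣
        ((k : Matrix (Fin n) (Fin n) ℤ_[p]) - g) i j := by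
    intro m hm
    induction m, hm using Nat.le_induction with
    | base =>
      intro g
      obtain ⟨k, hkK, hk⟩ := hsurj (Matrix.GeneralLinearGroup.map (PadicInt.toZModPow 2) g)
      exact ⟨k, hkK, red_eq_dvd hk⟩
    | succ m hm ih =>
      intro g
      obtain ⟨k0, hk0K, hk0⟩ := ih g
      have hD : ∀ i j, (p : ℤ_[p]) ^ m ∣
          ((g : Matrix (Fin n) (Fin n) ℤ_[p]) * ((k0⁻¹ : GL (Fin n) ℤ_[p]) :
            Matrix (Fin n) (Fin n) ℤ_[p]) - 1) i j := by
        have hid : (g : Matrix (Fin n) (Fin n) ℤ_[p]) * ((k0⁻¹ : GL (Fin n) ℤ_[p]) :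
            Matrix (Fin n) (Fin n) ℤ_[p]) - 1
            = 1 * ((g : Matrix (Fin n) (Fin n) ℤ_[p]) - k0) * ((k0⁻¹ : GL (Fin n) ℤ_[p]) :
              Matrix (Fin n) (Fin n) ℤ_[p]) := by
          rw [one_mul, sub_mul, Units.mul_inv]
        intro i j
        rw [hid]
        refine dvd_trip (fun i j => ?_) 1 _ i j
        rw [show (g : Matrix (Fin n) (Fin n) ℤ_[p]) - k0
          = -((k0 : Matrix (Fin n) (Fin n) ℤ_[p]) - g) by abel]
        exact (hk0 i j).neg_right
      obtain ⟨A, hA⟩ := entry_dvd_exists hD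
      obtain ⟨k1, hk1K, hk1⟩ := T m (by omega) A
      refine ⟨k1 * k0, mul_mem hk1K hk0K, fun i j => ?_⟩
      have hkey : ((k1 * k0 : GL (Fin n) ℤ_[p]) : Matrix (Fin n) (Fin n) ℤ_[p]) - g
          = 1 * ((k1 : Matrix (Fin n) (Fin n) ℤ_[p]) - (1 + (p : ℤ_[p]) ^ m • A)) * k0 := by
        have h2 : (1 + (p : ℤ_[p]) ^ m • A) * (k0 : Matrix (Fin n) (Fin n) ℤ_[p])
            = g := by
          rw [add_comm, ← eq_add_of_sub_eq hA, mul_assoc, Units.inv_mul, mul_one]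
        rw [one_mul, sub_mul, h2, Units.val_mul]
      rw [hkey]
      exact dvd_trip hk1 1 _ i j
  -- Step 3: density
  rw [Subgroup.eq_top_iff']
  intro g
  have hgc : g ∈ closure (K : Set (GL (Fin n) ℤ_[p])) := by
    choose k hkK hdvd using fun m : ℕ => S (m + 2) (by omega) g
    have hdvdinv : ∀ m i j, (p : ℤ_[p]) ^ (m + 2) ∣
        (((k m)⁻¹ : GL (Fin n) ℤ_[p]) - ((g⁻¹ : GL (Fin n) ℤ_[p]) :
          Matrix (Fin n) (Fin n) ℤ_[p]) : Matrix (Fin n) (Fin n) ℤ_[p]) i j := by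
      intro m
      have hid : (((k m)⁻¹ : GL (Fin n) ℤ_[p]) : Matrix (Fin n) (Fin n) ℤ_[p])
          - ((g⁻¹ : GL (Fin n) ℤ_[p]) : Matrix (Fin n) (Fin n) ℤ_[p])
          = (((k m)⁻¹ : GL (Fin n) ℤ_[p]) : Matrix (Fin n) (Fin n) ℤ_[p])
            * ((g : Matrix (Fin n) (Fin n) ℤ_[p]) - k m)
            * ((g⁻¹ : GL (Fin n) ℤ_[p]) : Matrix (Fin n) (Fin n) ℤ_[p]) := by
        rw [mul_sub, sub_mul, Units.inv_mul, one_mul, mul_assoc, Units.mul_inv, mul_one]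
      rw [hid]
      refine dvd_trip (fun i j => ?_) _ _
      rw [show (g : Matrix (Fin n) (Fin n) ℤ_[p]) - k m
        = -((k m : Matrix (Fin n) (Fin n) ℤ_[p]) - g) by abel]
      exact (hdvd m i j).neg_right
    -- entrywise convergence
    have hentry : ∀ (f : ℕ → Matrix (Fin n) (Fin n) ℤ_[p]) (F : Matrix (Fin n) (Fin n) ℤ_[p]),
        (∀ m i j, (p : ℤ_[p]) ^ (m + 2) ∣ (f m - F) i j) →
        Filter.Tendsto f Filter.atTop (nhds F) := by
      intro f F h
      refine tendsto_pi_nhds.mpr ?_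
      intro i
      rw [tendsto_pi_nhds]
      intro j
      rw [tendsto_iff_dist_tendsto_zero]
      have hb : Filter.Tendsto (fun m : ℕ => ((p : ℝ)⁻¹) ^ (m + 2)) Filter.atTop (nhds 0) := by
        have h0 : (0 : ℝ) ≤ (p : ℝ)⁻¹ := by positivity
        have h1 : (p : ℝ)⁻¹ < 1 := by
          rw [inv_lt_one_iff₀]
          right
          exact_mod_cast hprime.one_lt
        exact (tendsto_pow_atTop_nhds_zero_of_lt_one h0 h1).comp (Filter.tendsto_add_atTop_nat 2)
      refine squeeze_zero (fun m => dist_nonneg) (fun m => ?_) hb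
      have hnorm : ‖f m i j - F i j‖ ≤ (p : ℝ) ^ (-((m + 2 : ℕ)) : ℤ) := by
        rw [PadicInt.norm_le_pow_iff_mem_span_pow, Ideal.mem_span_singleton]
        simpa [Matrix.sub_apply] using h m i j
      rw [dist_eq_norm]
      calc ‖f m i j - F i j‖ ≤ (p : ℝ) ^ (-((m + 2 : ℕ)) : ℤ) := hnorm
        _ = ((p : ℝ)⁻¹) ^ (m + 2) := by
            rw [zpow_neg, zpow_natCast, inv_pow]
    refine mem_closure_of_tendsto (f := fun m : ℕ => k m) (b := Filter.atTop)
      ?_ (Filter.Eventually.of_forall hkK)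
    rw [Units.isInducing_embedProduct.tendsto_nhds_iff]
    refine Filter.Tendsto.prodMk_nhds ?_ ?_
    · exact hentry _ _ (fun m i j => by simpa using hdvd m i j)
    · exact (MulOpposite.continuous_op.tendsto _).comp
        (hentry (fun m => (((k m)⁻¹ : GL (Fin n) ℤ_[p]) : Matrix (Fin n) (Fin n) ℤ_[p])) _
          (fun m i j => hdvdinv m i j))
  rwa [hclosed.closure_eq] at hgc
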